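/- arXiv:1111.4600 — 4 statements merged into one kernel-verified Lean document; each statement's English description precedes it below -/
import Mathlib

section
/- For every nontrivial strongly connected edge-weighted graph G, the rate ρ(G) (the supremum of w_*(γ)/ℓ(γ) over all nonempty closed paths γ) equals the maximum of w_*(γ)/ℓ(γ) over all nonempty elementary closed paths γ. In particular, there exists an elementary critical closed path in G. -/
namespace Transients

variable {V : Type*}

/-- A walk of length `n` in the graph with edge relation `E`, given by its node
sequence `p 0, p 1, …, p n`. -/
def IsWalk (E : V → V → Prop) (n : ℕ) (p : ℕ → V) : Prop :=
  ∀ k, k < n → E (p k) (p (k + 1))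

/-- A closed walk: start node equals end node. -/
def IsClosedWalk (E : V → V → Prop) (n : ℕ) (p : ℕ → V) : Prop :=
  IsWalk E n p ∧ p 0 = p n

/-- A nonempty elementary closed walk: closed, and no node repeats except start = end. -/
def IsElemClosedWalk (E : V → V → Prop) (n : ℕ) (p : ℕ → V) : Prop :=
  0 < n ∧ IsClosedWalk E n p ∧ ∀ k l, k < n → l < n → p k = p l → k = l

/-- A simple walk: no node is visited twice. -/
def IsSimpleWalk (E : V → V → Prop) (n : ℕ) (p : ℕ → V) : Prop :=
  IsWalk E n p ∧ ∀ k l, k ≤ n → l ≤ n → p k = p l → k = l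

def StronglyConnected (E : V → V → Prop) : Prop :=
  ∀ i j : V, ∃ n p, IsWalk E n p ∧ p 0 = i ∧ p n = j

def NontrivialGraph (E : V → V → Prop) : Prop := ∃ i j, E i j

/-- The weight `w_*` of a walk in an edge-weighted graph. -/
noncomputable def walkWeight (w : V → V → ℝ) (n : ℕ) (p : ℕ → V) : ℝ :=
  ∑ k ∈ Finset.range n, w (p k) (p (k + 1))

/-- The rate ρ(G): supremum of `w_*(γ)/ℓ(γ)` over nonempty closed walks γ. -/
noncomputable def rate (E : V → V → Prop) (w : V → V → ℝ) : ℝ :=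
  sSup {x : ℝ | ∃ n p, 0 < n ∧ IsClosedWalk E n p ∧ x = walkWeight w n p / n}

/-- A critical closed walk: nonempty, closed, and its weight is ρ(G) times its length. -/
def IsCriticalWalk (E : V → V → Prop) (w : V → V → ℝ) (n : ℕ) (p : ℕ → V) : Prop :=
  0 < n ∧ IsClosedWalk E n p ∧ walkWeight w n p = rate E w * n

/-- A critical node: lies on some critical closed walk. -/
def CriticalNode (E : V → V → Prop) (w : V → V → ℝ) (i : V) : Prop :=
  ∃ n p k, IsCriticalWalk E w n p ∧ k ≤ n ∧ p k = i

/-- A critical edge: lies on some critical closed walk. -/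
def CriticalEdge (E : V → V → Prop) (w : V → V → ℝ) (i j : V) : Prop :=
  ∃ n p k, IsCriticalWalk E w n p ∧ k < n ∧ p k = i ∧ p (k + 1) = j

/-- The non-critical rate ρ_nc(G): supremum of mean weights of nonempty closed walks
containing no critical node. -/
noncomputable def ncRate (E : V → V → Prop) (w : V → V → ℝ) : ℝ :=
  sSup {x : ℝ | ∃ n p, 0 < n ∧ IsClosedWalk E n p ∧
    (∀ k, k ≤ n → ¬ CriticalNode E w (p k)) ∧ x = walkWeight w n p / n}

/-- Δ(G), the maximum edge weight. -/
noncomputable def maxWeight (E : V → V → Prop) (w : V → V → ℝ) : ℝ :=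
  sSup {x : ℝ | ∃ i j, E i j ∧ x = w i j}

/-- δ(G), the minimum edge weight. -/
noncomputable def minWeight (E : V → V → Prop) (w : V → V → ℝ) : ℝ :=
  sInf {x : ℝ | ∃ i j, E i j ∧ x = w i j}

open Classical in
/-- Δ_nc(G), the maximum weight of an edge joining two non-critical nodes
(ρ(G) if there is no such edge). -/
noncomputable def maxNcWeight (E : V → V → Prop) (w : V → V → ℝ) : ℝ :=
  if (∃ i j, E i j ∧ ¬ CriticalNode E w i ∧ ¬ CriticalNode E w j) then
    sSup {x : ℝ | ∃ i j, E i j ∧ ¬ CriticalNode E w i ∧ ¬ CriticalNode E w j ∧ x = w i j}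
  else rate E w

/-- `d` is the greatest common divisor of the set `S` of naturals. -/
def IsGcdOf (d : ℕ) (S : Set ℕ) : Prop :=
  (∀ s ∈ S, d ∣ s) ∧ ∀ e : ℕ, (∀ s ∈ S, e ∣ s) → e ∣ d

/-- The set of lengths of nonempty closed walks in the graph. -/
def ClosedLengths (E : V → V → Prop) : Set ℕ :=
  {n | 0 < n ∧ ∃ p, IsClosedWalk E n p}

/-- The set of lengths of nonempty closed walks starting at `i`. -/
def ClosedLengthsAt (E : V → V → Prop) (i : V) : Set ℕ :=
  {n | 0 < n ∧ ∃ p, IsWalk E n p ∧ p 0 = i ∧ p n = i}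

/-- There is a (possibly empty) closed walk of length `n` starting at `i`. -/
def HasClosedWalkAt (E : V → V → Prop) (i : V) (n : ℕ) : Prop :=
  ∃ p, IsWalk E n p ∧ p 0 = i ∧ p n = i

/-- cd(G), the cab driver's diameter: the maximum length of simple walks. -/
noncomputable def cabDiameter (E : V → V → Prop) : ℕ :=
  sSup {n | ∃ p, IsSimpleWalk E n p}

/-- cr(G), the circumference: the maximum length of nonempty elementary closed walks. -/
noncomputable def circumference (E : V → V → Prop) : ℕ :=
  sSup {n | ∃ p, IsElemClosedWalk E n p}

/-- `g` is the girth of the graph: the minimum length of nonempty elementary closed walks. -/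
def IsGirth (E : V → V → Prop) (g : ℕ) : Prop :=
  IsLeast {n | ∃ p, IsElemClosedWalk E n p} g

/-- `ep` is the exploration penalty of a graph of cyclicity `c`: the least `m` such that
for every node `i` and every multiple `n` of `c` with `n ≥ m` there is a closed walk
of length `n` starting at `i`. -/
def IsEp (E : V → V → Prop) (c ep : ℕ) : Prop :=
  IsLeast {m | ∀ i : V, ∀ n : ℕ, c ∣ n → m ≤ n → HasClosedWalkAt E i n} ep

/-- `i` and `j` lie in the same strongly connected component of the graph. -/
def SameComp (E : V → V → Prop) (i j : V) : Prop :=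
  (∃ n p, IsWalk E n p ∧ p 0 = i ∧ p n = j) ∧ (∃ n p, IsWalk E n p ∧ p 0 = j ∧ p n = i)

/-- `m` is the exploration penalty of the strongly connected component of `k`
(a component of cyclicity `c`). -/
def IsCompEp (E : V → V → Prop) (k : V) (c m : ℕ) : Prop :=
  IsLeast {m' | ∀ i : V, SameComp E k i → ∀ n : ℕ, c ∣ n → m' ≤ n → HasClosedWalkAt E i n} m

/-- Max-plus matrix product. -/
noncomputable def mpMul {N : ℕ} (A B : Matrix (Fin N) (Fin N) (WithBot ℝ)) :
    Matrix (Fin N) (Fin N) (WithBot ℝ) :=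
  fun i j => Finset.univ.sup fun k => A i k + B k j

/-- Max-plus matrix power, `A^{⊗n}`. -/
noncomputable def mpPow {N : ℕ} (A : Matrix (Fin N) (Fin N) (WithBot ℝ)) :
    ℕ → Matrix (Fin N) (Fin N) (WithBot ℝ)
  | 0 => fun i j => if i = j then (0 : WithBot ℝ) else ⊥
  | n + 1 => mpMul A (mpPow A n)

/-- Max-plus matrix-vector product. -/
noncomputable def mpVec {N : ℕ} (A : Matrix (Fin N) (Fin N) (WithBot ℝ))
    (v : Fin N → WithBot ℝ) : Fin N → WithBot ℝ :=
  fun i => Finset.univ.sup fun j => A i j + v j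

/-- The edge relation of the weighted graph `G(A)`. -/
def mEdge {N : ℕ} (A : Matrix (Fin N) (Fin N) (WithBot ℝ)) : Fin N → Fin N → Prop :=
  fun i j => A i j ≠ ⊥

/-- The edge weights of the weighted graph `G(A)`. -/
noncomputable def mWeight {N : ℕ} (A : Matrix (Fin N) (Fin N) (WithBot ℝ)) :
    Fin N → Fin N → ℝ :=
  fun i j => WithBot.unbotD 0 (A i j)

/-- `A` is irreducible: `G(A)` is strongly connected and has at least one edge. -/
def MPIrreducible {N : ℕ} (A : Matrix (Fin N) (Fin N) (WithBot ℝ)) : Prop :=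
  StronglyConnected (mEdge A) ∧ NontrivialGraph (mEdge A)

/-- The linear max-plus system `x(n) = A^{⊗n} ⊗ v`. -/
noncomputable def mpSystem {N : ℕ} (A : Matrix (Fin N) (Fin N) (WithBot ℝ)) (v : Fin N → ℝ)
    (n : ℕ) : Fin N → WithBot ℝ :=
  mpVec (mpPow A n) fun j => (v j : WithBot ℝ)

/-- The set of indices from which the system `x_{A,v}` is periodic with increment
`p·ρ(A)`; its least element is the transient `n_{A,v}`. -/
noncomputable def SysTransientSet {N : ℕ} (A : Matrix (Fin N) (Fin N) (WithBot ℝ))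
    (v : Fin N → ℝ) : Set ℕ :=
  {n₀ | ∃ p : ℕ, 0 < p ∧ ∀ n, n₀ ≤ n → ∀ i,
    mpSystem A v (n + p) i
      = mpSystem A v n i + ((p * rate (mEdge A) (mWeight A) : ℝ) : WithBot ℝ)}

/-- The set of indices from which the powers of `A` are periodic with increment
`p·ρ(A)`; its least element is the transient `n_A`. -/
noncomputable def MatTransientSet {N : ℕ} (A : Matrix (Fin N) (Fin N) (WithBot ℝ)) : Set ℕ :=
  {n₀ | ∃ p : ℕ, 0 < p ∧ ∀ n, n₀ ≤ n → ∀ i j,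
    mpPow A (n + p) i j
      = mpPow A n i j + ((p * rate (mEdge A) (mWeight A) : ℝ) : WithBot ℝ)}

/-- `‖v‖ = max_i v_i − min_i v_i`. -/
noncomputable def vnorm {N : ℕ} (v : Fin N → ℝ) : ℝ :=
  sSup (Set.range v) - sInf (Set.range v)



lemma extract_cycle (E : V → V → Prop) (w : V → V → ℝ) {n : ℕ} {p : ℕ → V}
    (hw : IsClosedWalk E n p) {a b : ℕ} (hab : a < b) (hbn : b < n) (hpab : p a = p b) :
    ∃ m q1 q2, 0 < m ∧ m < n ∧ IsClosedWalk E m q1 ∧ IsClosedWalk E (n - m) q2 ∧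
      walkWeight w n p = walkWeight w m q1 + walkWeight w (n - m) q2 := by
  obtain ⟨hwalk, hclosed⟩ := hw
  obtain ⟨m, hm⟩ : ∃ m, m = b - a := ⟨_, rfl⟩
  have hq2 : ∀ j, a ≤ j → (if j ≤ a then p j else p (j + m)) = p (j + m) := by
    intro j hja
    rcases Nat.lt_or_ge a j with h | h
    · rw [if_neg (by omega)]
    · have hja' : j = a := le_antisymm h hja
      subst hja'
      rw [if_pos le_rfl, (by omega : j + m = b), hpab]
  refine ⟨m, fun j => p (a + j), fun j => if j ≤ a then p j else p (j + m),
    by omega, by omega, ⟨?_, ?_⟩, ⟨?_, ?_⟩, ?_⟩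
  · intro k hk
    show E (p (a + k)) (p (a + (k + 1)))
    rw [(by ring : a + (k + 1) = (a + k) + 1)]
    exact hwalk _ (by omega)
  · show p (a + 0) = p (a + m)
    rw [Nat.add_zero, (by omega : a + m = b)]
    exact hpab
  · intro k hk
    show E (if k ≤ a then p k else p (k + m)) (if k + 1 ≤ a then p (k + 1) else p (k + 1 + m))
    rcases Nat.lt_or_ge k a with h | h
    · rw [if_pos (by omega), if_pos (by omega)]
      exact hwalk k (by omega)
    · rw [hq2 k h, hq2 (k + 1) (by omega), (by ring : k + 1 + m = (k + m) + 1)]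
      exact hwalk _ (by omega)
  · show (if 0 ≤ a then p 0 else p (0 + m)) = if n - m ≤ a then p (n - m) else p (n - m + m)
    rw [if_pos (Nat.zero_le a), if_neg (by omega), (by omega : n - m + m = n)]
    exact hclosed
  · have e1 : walkWeight w m (fun j => p (a + j))
        = ∑ j ∈ Finset.Ico a b, w (p j) (p (j + 1)) := by
      rw [Finset.sum_Ico_eq_sum_range, (by omega : b - a = m)]
      refine Finset.sum_congr rfl fun k hk => ?_
      show w (p (a + k)) (p (a + (k + 1))) = w (p (a + k)) (p (a + k + 1))
      rw [(by ring : a + (k + 1) = a + k + 1)]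
    have e2 : walkWeight w (n - m) (fun j => if j ≤ a then p j else p (j + m))
        = ∑ j ∈ Finset.range a, w (p j) (p (j + 1))
          + ∑ j ∈ Finset.Ico b n, w (p j) (p (j + 1)) := by
      unfold walkWeight
      rw [Finset.range_eq_Ico, ← Finset.sum_Ico_consecutive _ (Nat.zero_le a) (by omega : a ≤ n - m)]
      congr 1
      · rw [← Finset.range_eq_Ico]
        refine Finset.sum_congr rfl fun k hk => ?_
        simp only [Finset.mem_range] at hk
        show w (if k ≤ a then p k else p (k + m)) (if k + 1 ≤ a then p (k+1) else p (k+1+m))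
            = w (p k) (p (k + 1))
        rw [if_pos (by omega), if_pos (by omega)]
      · rw [Finset.sum_Ico_eq_sum_range, Finset.sum_Ico_eq_sum_range,
          (by omega : n - m - a = n - b)]
        refine Finset.sum_congr rfl fun k hk => ?_
        show w (if a + k ≤ a then p (a+k) else p (a+k+m)) (if a + k + 1 ≤ a then p (a+k+1) else p (a+k+1+m))
            = w (p (b + k)) (p (b + k + 1))
        rw [hq2 (a + k) (by omega), hq2 (a + k + 1) (by omega),
          (by omega : a + k + m = b + k), (by omega : a + k + 1 + m = b + k + 1)]
    rw [e1, e2]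
    unfold walkWeight
    rw [Finset.range_eq_Ico, ← Finset.sum_Ico_consecutive _ (Nat.zero_le a) (le_of_lt (lt_trans hab hbn)),
      ← Finset.sum_Ico_consecutive _ (le_of_lt hab) (le_of_lt hbn), ← Finset.range_eq_Ico]
    ring

lemma find_repeat {n : ℕ} {p : ℕ → V}
    (h : ¬ ∀ k l, k < n → l < n → p k = p l → k = l) :
    ∃ a b, a < b ∧ b < n ∧ p a = p b := by
  push_neg at h
  obtain ⟨k, l, hk, hl, heq, hne⟩ := h
  rcases Nat.lt_or_ge k l with h | h
  · exact ⟨k, l, h, hl, heq⟩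
  · exact ⟨l, k, by omega, hk, heq.symm⟩

lemma exists_elem (E : V → V → Prop) (w : V → V → ℝ) :
    ∀ n p, 0 < n → IsClosedWalk E n p → ∃ m q, IsElemClosedWalk E m q := by
  intro n
  induction n using Nat.strong_induction_on with
  | _ n ih =>
    intro p hn hw
    by_cases helem : ∀ k l, k < n → l < n → p k = p l → k = l
    · exact ⟨n, p, hn, hw, helem⟩
    · obtain ⟨a, b, hab, hbn, hpab⟩ := find_repeat helem
      obtain ⟨m, q1, q2, hm0, hmn, hq1, hq2, -⟩ := extract_cycle E w hw hab hbn hpab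
      exact ih m hmn q1 hm0 hq1

lemma mean_le (E : V → V → Prop) (w : V → V → ℝ) (M : ℝ)
    (hM : ∀ m q, IsElemClosedWalk E m q → walkWeight w m q / m ≤ M) :
    ∀ n p, 0 < n → IsClosedWalk E n p → walkWeight w n p / n ≤ M := by
  intro n
  induction n using Nat.strong_induction_on with
  | _ n ih =>
    intro p hn hw
    by_cases helem : ∀ k l, k < n → l < n → p k = p l → k = l
    · exact hM n p ⟨hn, hw, helem⟩
    · obtain ⟨a, b, hab, hbn, hpab⟩ := find_repeat helem
      obtain ⟨m, q1, q2, hm0, hmn, hq1, hq2, hsum⟩ := extract_cycle E w hw hab hbn hpab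
      have h1 : walkWeight w m q1 ≤ m * M := by
        have := ih m hmn q1 hm0 hq1
        rw [div_le_iff₀ (by positivity)] at this
        linarith
      have h2 : walkWeight w (n - m) q2 ≤ (n - m : ℕ) * M := by
        have := ih (n - m) (by omega) q2 (by omega) hq2
        rw [div_le_iff₀ (by exact_mod_cast Nat.sub_pos_of_lt hmn)] at this
        linarith
      rw [div_le_iff₀ (by exact_mod_cast hn), hsum]
      have hc : ((m : ℝ) + ((n - m : ℕ) : ℝ)) = (n : ℝ) := by
        push_cast [Nat.cast_sub (le_of_lt hmn)]
        ring
      have h3 : (m : ℝ) * M + ((n - m : ℕ) : ℝ) * M = M * n := by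
        rw [← add_mul, hc]; ring
      linarith

lemma elem_len_le [Fintype V] {E : V → V → Prop} {n : ℕ} {p : ℕ → V}
    (h : IsElemClosedWalk E n p) : n ≤ Fintype.card V := by
  obtain ⟨hn, -, hinj⟩ := h
  have : Function.Injective (fun k : Fin n => p k) := by
    intro k l hkl
    exact Fin.ext (hinj k l k.isLt l.isLt hkl)
  simpa using Fintype.card_le_of_injective _ this

lemma elemSet_finite [Fintype V] (E : V → V → Prop) (w : V → V → ℝ) :
    {x : ℝ | ∃ n p, IsElemClosedWalk E n p ∧ x = walkWeight w n p / n}.Finite := by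
  classical
  set c := Fintype.card V with hc
  apply Set.Finite.subset (Set.finite_range
    (fun q : Fin (c + 1) × (Fin (c + 2) → V) =>
      walkWeight w q.1 (fun k => q.2 ⟨min k (c + 1), by omega⟩) / (q.1 : ℕ)))
  rintro x ⟨n, p, helem, rfl⟩
  have hn : n ≤ c := elem_len_le helem
  refine ⟨(⟨n, by omega⟩, fun i => p i), ?_⟩
  simp only
  congr 1
  · unfold walkWeight
    refine Finset.sum_congr rfl fun k hk => ?_
    simp only [Finset.mem_range] at hk
    have h1 : min k (c + 1) = k := by omega
    have h2 : min (k + 1) (c + 1) = k + 1 := by omega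
    simp [h1, h2]

/-- For a nontrivial strongly connected edge-weighted graph, the rate
ρ(G) equals the maximum mean weight over nonempty elementary closed paths; in
particular an elementary critical closed path exists. -/
theorem stmt_1 {V : Type*} [Fintype V] (E : V → V → Prop) (w : V → V → ℝ)
    (hnt : NontrivialGraph E) (hsc : StronglyConnected E) :
    (∀ n p, IsElemClosedWalk E n p → walkWeight w n p / n ≤ rate E w) ∧
    (∃ n p, IsElemClosedWalk E n p ∧ walkWeight w n p / n = rate E w) := by
  classical
  set T := {x : ℝ | ∃ n p, IsElemClosedWalk E n p ∧ x = walkWeight w n p / n} with hT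
  set S := {x : ℝ | ∃ n p, 0 < n ∧ IsClosedWalk E n p ∧ x = walkWeight w n p / n} with hS
  have hTfin : T.Finite := elemSet_finite E w
  obtain ⟨i, j, hij⟩ := hnt
  obtain ⟨n0, p0, hp0, hp00, hp0n⟩ := hsc j i
  have hcw : IsClosedWalk E (n0 + 1) (fun k => if k = 0 then i else p0 (k - 1)) := by
    constructor
    · intro k hk
      rcases Nat.eq_zero_or_pos k with rfl | hkpos
      · simpa [hp00] using hij
      · have h1 : ¬ (k = 0) := by omega
        have h2 : ¬ (k + 1 = 0) := by omega
        simp only [h1, h2, if_false]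
        have : k + 1 - 1 = (k - 1) + 1 := by omega
        rw [this]
        exact hp0 (k - 1) (by omega)
    · simp [hp0n]
  have hTne : T.Nonempty := by
    obtain ⟨m, q, hq⟩ := exists_elem E w (n0 + 1) _ (by omega) hcw
    exact ⟨_, m, q, hq, rfl⟩
  have hM : sSup T ∈ T := hTne.csSup_mem hTfin
  have hTbdd : BddAbove T := hTfin.bddAbove
  have hub : ∀ x ∈ S, x ≤ sSup T := by
    rintro x ⟨n, p, hn, hw, rfl⟩
    exact mean_le E w (sSup T) (fun m q hq => le_csSup hTbdd ⟨m, q, hq, rfl⟩) n p hn hw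
  have hTS : T ⊆ S := by
    rintro x ⟨n, p, ⟨hn, hw, -⟩, rfl⟩
    exact ⟨n, p, hn, hw, rfl⟩
  have hSbdd : BddAbove S := ⟨sSup T, hub⟩
  have hrate : rate E w = sSup T := by
    apply le_antisymm
    · exact csSup_le (hTne.mono hTS) hub
    · exact le_csSup hSbdd (hTS hM)
  constructor
  · intro n p hp
    rw [hrate]
    exact le_csSup hTbdd ⟨n, p, hp, rfl⟩
  · obtain ⟨n, p, hp, hval⟩ := hM
    exact ⟨n, p, hp, by rw [hrate, hval]⟩


end Transients
end

section
/- Let G be a nontrivial strongly connected directed graph with N nodes and girth g. For every node i of G, there exists a finite set A of lengths of nonempty closed paths starting at i such that gcd(A) = c(G), A contains the length of every elementary closed path starting at i, and every element n of A satisfies g ≤ n ≤ 2N − 1. -/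
namespace Transients

variable {V : Type*}

section Aux
variable {E : V → V → Prop}

lemma walk_concat {m n : ℕ} {p q : ℕ → V}
    (hp : IsWalk E m p) (hq : IsWalk E n q) (h : p m = q 0) :
    ∃ r, IsWalk E (m + n) r ∧ r 0 = p 0 ∧ r (m + n) = q n := by
  classical
  set r : ℕ → V := fun k => if k ≤ m then p k else q (k - m) with hr
  have hge : ∀ k, m ≤ k → r k = q (k - m) := by
    intro k hk
    rcases eq_or_lt_of_le hk with he | hl
    · simp [hr, ← he, h]
    · simp [hr, Nat.not_le.mpr hl]
  refine ⟨r, ?_, by simp [hr], ?_⟩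
  · intro k hk
    by_cases hkm : k + 1 ≤ m
    · have h1 : r k = p k := by simp [hr, Nat.le_of_succ_le hkm]
      have h2 : r (k + 1) = p (k + 1) := by simp [hr, hkm]
      rw [h1, h2]; exact hp k (by omega)
    · have hmk : m ≤ k := by omega
      rw [hge k hmk, hge (k + 1) (by omega)]
      have : k + 1 - m = (k - m) + 1 := by omega
      rw [this]
      exact hq (k - m) (by omega)
  · rw [hge (m + n) (by omega)]
    congr 1; omega

lemma walk_splice {n k l : ℕ} {p : ℕ → V} (hp : IsWalk E n p)
    (hkl : k < l) (hln : l ≤ n) (heq : p k = p l) :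
    ∃ r, IsWalk E (n - (l - k)) r ∧ r 0 = p 0 ∧ r (n - (l - k)) = p n := by
  classical
  set r : ℕ → V := fun s => if s ≤ k then p s else p (s + (l - k)) with hr
  have hge : ∀ s, k ≤ s → r s = p (s + (l - k)) := by
    intro s hs
    rcases eq_or_lt_of_le hs with he | hl'
    · subst he
      have e : k + (l - k) = l := by omega
      simp [hr, e, heq]
    · simp [hr, Nat.not_le.mpr hl']
  refine ⟨r, ?_, by simp [hr], ?_⟩
  · intro s hs
    by_cases hsk : s + 1 ≤ k
    · have h1 : r s = p s := by simp [hr, Nat.le_of_succ_le hsk]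
      have h2 : r (s + 1) = p (s + 1) := by simp [hr, hsk]
      rw [h1, h2]; exact hp s (by omega)
    · have hks : k ≤ s := by omega
      rw [hge s hks, hge (s + 1) (by omega)]
      have : s + 1 + (l - k) = (s + (l - k)) + 1 := by omega
      rw [this]
      exact hp (s + (l - k)) (by omega)
  · rw [hge (n - (l - k)) (by omega)]
    congr 1; omega

lemma walk_rotate {n : ℕ} {p : ℕ → V} (hp : IsClosedWalk E n p) {k₀ : ℕ} (hk : k₀ ≤ n) :
    ∃ q, IsWalk E n q ∧ q 0 = p k₀ ∧ q n = p k₀ := by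
  classical
  set q : ℕ → V := fun s => if k₀ + s ≤ n then p (k₀ + s) else p (k₀ + s - n) with hq
  have qle : ∀ s, k₀ + s ≤ n → q s = p (k₀ + s) := fun s hs => by simp [hq, hs]
  have qgt : ∀ s, n < k₀ + s → q s = p (k₀ + s - n) := fun s hs => by
    simp [hq, Nat.not_le.mpr hs]
  refine ⟨q, ?_, by simp [hq, hk], ?_⟩
  · intro s hs
    rcases lt_trichotomy (k₀ + s) n with h1 | h1 | h1
    · have e1 : q s = p (k₀ + s) := qle s h1.le
      have e2 : q (s + 1) = p (k₀ + s + 1) := qle (s + 1) (by omega)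
      rw [e1, e2]; exact hp.1 (k₀ + s) h1
    · have e1 : q s = p 0 := by rw [qle s h1.le, h1, ← hp.2]
      have e2 : q (s + 1) = p 1 := by
        rw [qgt (s + 1) (by omega)]; congr 1; omega
      rw [e1, e2]; exact hp.1 0 (by omega)
    · have e1 : q s = p (k₀ + s - n) := qgt s h1
      have e2 : q (s + 1) = p ((k₀ + s - n) + 1) := by
        rw [qgt (s + 1) (by omega)]; congr 1; omega
      rw [e1, e2]; exact hp.1 (k₀ + s - n) (by omega)
  · rcases Nat.eq_zero_or_pos k₀ with h0 | h0
    · subst h0; rw [qle n (by omega)]; rw [Nat.zero_add, ← hp.2]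
    · rw [qgt n (by omega)]; congr 1; omega

lemma exists_simple_walk : ∀ n : ℕ, ∀ p : ℕ → V, IsWalk E n p →
    ∃ m q, m ≤ n ∧ IsSimpleWalk E m q ∧ q 0 = p 0 ∧ q m = p n := by
  intro n
  induction n using Nat.strong_induction_on with
  | _ n ih =>
    intro p hp
    by_cases hinj : ∀ k l, k ≤ n → l ≤ n → p k = p l → k = l
    · exact ⟨n, p, le_rfl, ⟨hp, hinj⟩, rfl, rfl⟩
    · push_neg at hinj
      obtain ⟨k, l, hk, hl, heq, hne⟩ := hinj
      obtain ⟨k, l, hkl, hln, heq⟩ : ∃ k l, k < l ∧ l ≤ n ∧ p k = p l := by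
        rcases hne.lt_or_gt with h' | h'
        · exact ⟨k, l, h', hl, heq⟩
        · exact ⟨l, k, h', hk, heq.symm⟩
      obtain ⟨r, hr, hr0, hrn⟩ := walk_splice hp hkl hln heq
      obtain ⟨m, s, hm, hs, hs0, hsm⟩ := ih (n - (l - k)) (by omega) r hr
      exact ⟨m, s, by omega, hs, hs0.trans hr0, hsm.trans hrn⟩

lemma closed_induction (P : ℕ → Prop)
    (helem : ∀ n p, IsElemClosedWalk E n p → P n)
    (hadd : ∀ a b, P a → P b → P (a + b)) :
    ∀ n, 0 < n → ∀ p, IsClosedWalk E n p → P n := by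
  intro n
  induction n using Nat.strong_induction_on with
  | _ n ih =>
    intro hn p hp
    by_cases hinj : ∀ k l, k < n → l < n → p k = p l → k = l
    · exact helem n p ⟨hn, hp, hinj⟩
    · push_neg at hinj
      obtain ⟨k, l, hk, hl, heq, hne⟩ := hinj
      obtain ⟨k, l, hkl, hln, heq⟩ : ∃ k l, k < l ∧ l < n ∧ p k = p l := by
        rcases hne.lt_or_gt with h' | h'
        · exact ⟨k, l, h', hl, heq⟩
        · exact ⟨l, k, h', hk, heq.symm⟩
      have h1 : P (l - k) := by
        apply ih (l - k) (by omega) (by omega) (fun s => p (k + s))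
        constructor
        · intro s hs
          have := hp.1 (k + s) (by omega)
          simpa [show k + s + 1 = k + (s + 1) from by omega] using this
        · show p (k + 0) = p (k + (l - k))
          rw [Nat.add_zero, show k + (l - k) = l from by omega]; exact heq
      have h2 : P (n - (l - k)) := by
        obtain ⟨r, hr, hr0, hrn⟩ := walk_splice hp.1 hkl hln.le heq
        exact ih (n - (l - k)) (by omega) (by omega) r ⟨hr, by rw [hr0, hrn, hp.2]⟩
      have := hadd _ _ h1 h2
      rwa [show (l - k) + (n - (l - k)) = n from by omega] at this

lemma simple_walk_card [Fintype V] {n : ℕ} {p : ℕ → V} (h : IsSimpleWalk E n p) :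
    n + 1 ≤ Fintype.card V := by
  have hinj : Function.Injective (fun k : Fin (n + 1) => p k) := by
    intro a b hab
    exact Fin.ext (h.2 a b (by omega) (by omega) hab)
  simpa using Fintype.card_le_of_injective _ hinj

lemma elem_card [Fintype V] {n : ℕ} {p : ℕ → V} (h : IsElemClosedWalk E n p) :
    n ≤ Fintype.card V := by
  have hinj : Function.Injective (fun k : Fin n => p k) := by
    intro a b hab
    exact Fin.ext (h.2.2 a b a.2 b.2 hab)
  simpa using Fintype.card_le_of_injective _ hinj

end Aux

/-- In a nontrivial strongly connected graph with `N` nodes, girth `g`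
and cyclicity `c`, every node `i` admits a finite set `A` of lengths of nonempty
closed paths starting at `i` with `gcd A = c`, containing the length of every
elementary closed path starting at `i`, and with all elements in `[g, 2N−1]`. -/
theorem stmt_6 {V : Type*} [Fintype V] (E : V → V → Prop)
    (hnt : NontrivialGraph E) (hsc : StronglyConnected E)
    (c g : ℕ) (hc : IsGcdOf c (ClosedLengths E)) (hg : IsGirth E g) (i : V) :
    ∃ A : Finset ℕ, (↑A : Set ℕ) ⊆ ClosedLengthsAt E i ∧ A.gcd id = c ∧
      (∀ n p, IsElemClosedWalk E n p → p 0 = i → n ∈ A) ∧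
      ∀ n ∈ A, g ≤ n ∧ n ≤ 2 * Fintype.card V - 1 := by
  classical
  set N := Fintype.card V with hN
  have hN1 : 1 ≤ N := Fintype.card_pos_iff.mpr ⟨i⟩
  have hg1 : 0 < g := by obtain ⟨p, hp⟩ := hg.1; exact hp.1
  have hgle : ∀ n, 0 < n → ∀ p, IsClosedWalk E n p → g ≤ n :=
    closed_induction (fun n => g ≤ n)
      (fun n p hp => hg.2 ⟨p, hp⟩)
      (fun a b ha _ => le_trans ha (Nat.le_add_right a b))
  set A : Finset ℕ := (Finset.Icc g (2 * N - 1)).filter (fun n => HasClosedWalkAt E i n)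
    with hA
  have hmem : ∀ n, n ∈ A ↔ (g ≤ n ∧ n ≤ 2 * N - 1 ∧ HasClosedWalkAt E i n) := by
    intro n; simp [hA, Finset.mem_filter, Finset.mem_Icc, and_assoc]
  have hsub : (↑A : Set ℕ) ⊆ ClosedLengthsAt E i := by
    intro n hn
    rw [Finset.mem_coe, hmem] at hn
    exact ⟨by omega, hn.2.2⟩
  have helemA : ∀ n p, IsElemClosedWalk E n p → p 0 = i → n ∈ A := by
    intro n p hp h0
    rw [hmem]
    have hle := elem_card hp
    refine ⟨hg.2 ⟨p, hp⟩, by omega, p, hp.2.1.1, h0, by rw [← hp.2.1.2, h0]⟩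
  -- gcd A divides every elementary cycle length
  have hkey : ∀ ℓ z, IsElemClosedWalk E ℓ z → A.gcd id ∣ ℓ := by
    intro ℓ z hz
    by_cases hi : ∃ k, k < ℓ ∧ z k = i
    · obtain ⟨k, hk, hki⟩ := hi
      obtain ⟨q, hqw, hq0, hqn⟩ := walk_rotate hz.2.1 hk.le
      have : ℓ ∈ A := by
        rw [hmem]
        have hle := elem_card hz
        exact ⟨hg.2 ⟨z, hz⟩, by omega, q, hqw, by rw [hq0, hki], by rw [hqn, hki]⟩
      exact Finset.gcd_dvd this
    · push_neg at hi
      -- forward simple path from i to z 0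
      obtain ⟨n₁, p₁, hw₁, h10, h1n⟩ := hsc i (z 0)
      obtain ⟨m, q, hmn, hq, hq0, hqm⟩ := exists_simple_walk n₁ p₁ hw₁
      have hex : ∃ s, s ≤ m ∧ ∃ k, k < ℓ ∧ z k = q s :=
        ⟨m, le_rfl, 0, hz.1, by rw [hqm, h1n]⟩
      set a := Nat.find hex with haa
      obtain ⟨ham, k₁, hk₁, hk₁e⟩ := Nat.find_spec hex
      have ha1 : 0 < a := by
        rcases Nat.eq_zero_or_pos a with h0 | h0
        · exfalso
          have := Nat.find_spec hex
          rw [← haa, h0] at this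
          obtain ⟨-, k, hk, hke⟩ := this
          exact hi k hk (by rw [hke, hq0, h10])
        · exact h0
      -- counting: a + ℓ ≤ N
      have hcount : a + ℓ ≤ N := by
        have hinj : Function.Injective
            (fun t : Fin (a + ℓ) => if (t : ℕ) < a then q t else z ((t : ℕ) - a)) := by
          intro t₁ t₂ h12
          simp only [] at h12
          by_cases h1 : (t₁ : ℕ) < a <;> by_cases h2 : (t₂ : ℕ) < a
          · rw [if_pos h1, if_pos h2] at h12
            exact Fin.ext (hq.2 t₁ t₂ (by omega) (by omega) h12)
          · rw [if_pos h1, if_neg h2] at h12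
            exact absurd ⟨by omega, (t₂ : ℕ) - a, by omega, h12.symm⟩
              (Nat.find_min hex (show (t₁ : ℕ) < a from h1))
          · rw [if_neg h1, if_pos h2] at h12
            exact absurd ⟨by omega, (t₁ : ℕ) - a, by omega, h12⟩
              (Nat.find_min hex (show (t₂ : ℕ) < a from h2))
          · rw [if_neg h1, if_neg h2] at h12
            have := hz.2.2 _ _ (show (t₁ : ℕ) - a < ℓ by omega)
              (show (t₂ : ℕ) - a < ℓ by omega) h12
            exact Fin.ext (by omega)
        simpa using Fintype.card_le_of_injective _ hinj
      -- backward simple path from q a to i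
      obtain ⟨n₂, p₂, hw₂, h20, h2n⟩ := hsc (q a) i
      obtain ⟨b, r, hbn, hr, hr0, hrb⟩ := exists_simple_walk n₂ p₂ hw₂
      have hb : b + 1 ≤ N := simple_walk_card hr
      -- prefix of q of length a
      have hqa : IsWalk E a q := fun s hs => hq.1 s (by omega)
      -- closed walk of length a + b at i
      obtain ⟨w₁, hw1, hw10, hw1e⟩ := walk_concat hqa hr.1 (by rw [hr0, h20])
      have hx : (a + b) ∈ A := by
        rw [hmem]
        have hcl : IsClosedWalk E (a + b) w₁ := ⟨hw1, by rw [hw10, hw1e, hq0, h10, hrb, h2n]⟩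
        refine ⟨hgle (a + b) (by omega) w₁ hcl, by omega,
          w₁, hw1, by rw [hw10, hq0, h10], by rw [hw1e, hrb, h2n]⟩
      -- rotated cycle at q a
      obtain ⟨y, hyw, hy0, hyℓ⟩ := walk_rotate hz.2.1 hk₁.le
      -- closed walk of length a + ℓ + b at i
      obtain ⟨w₂, hw2, hw20, hw2e⟩ := walk_concat hqa hyw (by rw [hy0, hk₁e])
      obtain ⟨w₃, hw3, hw30, hw3e⟩ := walk_concat hw2 hr.1 (by rw [hw2e, hyℓ, hk₁e, hr0, h20])
      have hxl : (a + ℓ + b) ∈ A := by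
        rw [hmem]
        have hcl : IsClosedWalk E (a + ℓ + b) w₃ :=
          ⟨hw3, by rw [hw30, hw20, hq0, h10, hw3e, hrb, h2n]⟩
        refine ⟨hgle (a + ℓ + b) (by omega) w₃ hcl, by omega,
          w₃, hw3, by rw [hw30, hw20, hq0, h10], by rw [hw3e, hrb, h2n]⟩
      have d1 : A.gcd id ∣ (a + b) := Finset.gcd_dvd hx
      have d2 : A.gcd id ∣ (a + ℓ + b) := Finset.gcd_dvd hxl
      have := Nat.dvd_sub d2 d1
      rwa [show (a + ℓ + b) - (a + b) = ℓ from by omega] at this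
  have hdvdall : ∀ s ∈ ClosedLengths E, A.gcd id ∣ s := by
    intro s hs
    obtain ⟨hs0, p, hp⟩ := hs
    exact closed_induction (fun n => A.gcd id ∣ n) hkey
      (fun a b ha hb => Nat.dvd_add ha hb) s hs0 p hp
  have h1 : A.gcd id ∣ c := hc.2 _ hdvdall
  have h2 : c ∣ A.gcd id := by
    apply Finset.dvd_gcd
    intro n hn
    rw [hmem] at hn
    obtain ⟨p, hw, h0, hn'⟩ := hn.2.2
    exact hc.1 n ⟨by omega, p, hw, by rw [h0, hn']⟩
  exact ⟨A, hsub, Nat.dvd_antisymm h1 h2, helemA,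
    fun n hn => by rw [hmem] at hn; exact ⟨hn.1, hn.2.1⟩⟩

end Transients
end

section
/- Let G be a directed graph, let d be a positive integer, let π be a path in G, and let k be a node of π. Then there exists a path π̂ in G with the same start node and the same end node as π such that k is a node of π̂, ℓ(π̂) ≡ ℓ(π) (mod d), and ℓ(π̂) ≤ (d−1)·cr(G) + (d+1)·cd(G). Moreover, if G is edge-weighted and every nonempty closed path of G has nonpositive weight, then π̂ can additionally be chosen with w_*(π̂) ≥ w_*(π). -/
namespace Transients

variable {V : Type*}

private lemma sum_range_add' {M : Type*} [AddCommMonoid M] (f : ℕ → M) (m n : ℕ) :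
    ∑ i ∈ Finset.range (m + n), f i
      = (∑ i ∈ Finset.range m, f i) + ∑ i ∈ Finset.range n, f (m + i) := by
  induction n with
  | zero => simp
  | succ k ih =>
      rw [Nat.add_succ, Finset.sum_range_succ, ih, Finset.sum_range_succ, add_assoc]

lemma simple_le_cd [Fintype V] {E : V → V → Prop} {m : ℕ} {p : ℕ → V}
    (h : IsSimpleWalk E m p) : m ≤ cabDiameter E := by
  have hbdd : BddAbove {n | ∃ p : ℕ → V, IsSimpleWalk E n p} := by
    refine ⟨Fintype.card V, fun x hx => ?_⟩
    obtain ⟨q, hq⟩ := hx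
    have hinj : Function.Injective (fun i : Fin (x + 1) => q i) := by
      intro i j hij
      exact Fin.ext (hq.2 i j (Nat.lt_succ_iff.mp i.isLt) (Nat.lt_succ_iff.mp j.isLt) hij)
    have := Fintype.card_le_of_injective _ hinj
    simp only [Fintype.card_fin] at this
    omega
  exact le_csSup hbdd ⟨p, h⟩

lemma elem_le_cr [Fintype V] {E : V → V → Prop} {m : ℕ} {p : ℕ → V}
    (h : IsElemClosedWalk E m p) : m ≤ circumference E := by
  have hbdd : BddAbove {n | ∃ p : ℕ → V, IsElemClosedWalk E n p} := by
    refine ⟨Fintype.card V, fun x hx => ?_⟩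
    obtain ⟨q, hq⟩ := hx
    have hinj : Function.Injective (fun i : Fin x => q i) := by
      intro i j hij
      exact Fin.ext (hq.2.2 i j i.isLt j.isLt hij)
    have := Fintype.card_le_of_injective _ hinj
    simpa using this
  exact le_csSup hbdd ⟨p, h⟩

lemma window_repeat [Fintype V] {E : V → V → Prop} {n : ℕ} {p : ℕ → V}
    (hp : IsWalk E n p) {e : ℕ} (he : e + (cabDiameter E + 1) ≤ n) :
    ∃ x y, e ≤ x ∧ x < y ∧ y ≤ e + (cabDiameter E + 1) ∧ p x = p y := by
  by_contra hcon
  push_neg at hcon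
  have hs : IsSimpleWalk E (cabDiameter E + 1) (fun i => p (e + i)) := by
    constructor
    · intro k hk
      exact hp (e + k) (by omega)
    · intro k l hk hl hkl
      by_contra hne
      rcases Nat.lt_or_ge k l with h | h
      · exact hcon (e + k) (e + l) (by omega) (by omega) (by omega) hkl
      · have hlk : l < k := by omega
        exact hcon (e + l) (e + k) (by omega) (by omega) (by omega) hkl.symm
  have := simple_le_cd hs
  omega

lemma one_le_cr [Fintype V] {E : V → V → Prop} {n : ℕ} {p : ℕ → V}
    (hp : IsWalk E n p) {x y : ℕ} (hxy : x < y) (hyn : y ≤ n) (hcl : p x = p y) :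
    1 ≤ circumference E := by
  classical
  have hex : ∃ c, 0 < c ∧ ∃ z, z + c ≤ n ∧ p z = p (z + c) :=
    ⟨y - x, by omega, x, by omega, by rw [show x + (y - x) = y by omega]; exact hcl⟩
  set c0 := Nat.find hex with hc0
  obtain ⟨hc0pos, z0, hz0n, hz0⟩ := Nat.find_spec hex
  have key : ∀ k l, k < l → l < c0 → p (z0 + k) ≠ p (z0 + l) := by
    intro k l hkl hlc hkl_eq
    have hmem : 0 < l - k ∧ ∃ z, z + (l - k) ≤ n ∧ p z = p (z + (l - k)) :=
      ⟨by omega, z0 + k, by omega, by rw [show z0 + k + (l - k) = z0 + l by omega]; exact hkl_eq⟩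
    exact Nat.find_min hex (by omega : l - k < c0) hmem
  have helem : IsElemClosedWalk E c0 (fun z => p (z0 + z)) := by
    refine ⟨hc0pos, ⟨fun k hk => hp (z0 + k) (by omega), by simpa using hz0⟩, ?_⟩
    intro k l hk hl hkl
    by_contra hne
    rcases Nat.lt_or_ge k l with h | h
    · exact key k l h hl hkl
    · exact key l k (by omega) hk hkl.symm
  calc 1 ≤ c0 := hc0pos
    _ ≤ circumference E := elem_le_cr helem

lemma remove_single (E : V → V → Prop) (wE : V → V → ℝ) (x c u : ℕ) (p : ℕ → V)
    (hp : IsWalk E (x + c + u) p) (hcl : p x = p (x + c)) :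
    IsWalk E (x + u) (fun z => if z < x then p z else p (z + c)) ∧
    (∀ z, z ≤ x → (if z < x then p z else p (z + c)) = p z) ∧
    walkWeight wE (x + u) (fun z => if z < x then p z else p (z + c))
      + walkWeight wE c (fun z => p (x + z)) = walkWeight wE (x + c + u) p := by
  have hagree : ∀ z, z ≤ x → (if z < x then p z else p (z + c)) = p z := by
    intro z hz
    rcases Nat.lt_or_ge z x with h | h
    · rw [if_pos h]
    · have hzx : z = x := by omega
      subst hzx
      rw [if_neg (by omega)]
      exact hcl.symm
  have hwalk : IsWalk E (x + u) (fun z => if z < x then p z else p (z + c)) := by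
    intro k hk
    rcases Nat.lt_or_ge k x with h | h
    · show E (if k < x then p k else p (k + c)) (if k + 1 < x then p (k + 1) else p (k + 1 + c))
      rw [if_pos h, hagree (k + 1) (by omega)]
      exact hp k (by omega)
    · show E (if k < x then p k else p (k + c)) (if k + 1 < x then p (k + 1) else p (k + 1 + c))
      rw [if_neg (by omega), if_neg (by omega), show k + 1 + c = k + c + 1 by omega]
      exact hp (k + c) (by omega)
  refine ⟨hwalk, hagree, ?_⟩
  show (∑ k ∈ Finset.range (x + u), wE ((fun z => if z < x then p z else p (z + c)) k)
          ((fun z => if z < x then p z else p (z + c)) (k + 1)))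
      + (∑ k ∈ Finset.range c, wE ((fun z => p (x + z)) k) ((fun z => p (x + z)) (k + 1)))
      = ∑ k ∈ Finset.range (x + c + u), wE (p k) (p (k + 1))
  have eL : (∑ k ∈ Finset.range (x + u), wE ((fun z => if z < x then p z else p (z + c)) k)
          ((fun z => if z < x then p z else p (z + c)) (k + 1)))
      = (∑ k ∈ Finset.range x, wE (p k) (p (k + 1)))
        + ∑ k ∈ Finset.range u, wE (p (x + c + k)) (p (x + c + k + 1)) := by
    rw [sum_range_add']
    congr 1
    · refine Finset.sum_congr rfl fun k hk => ?_
      simp only [Finset.mem_range] at hk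
      show wE (if k < x then p k else p (k + c)) (if k + 1 < x then p (k + 1) else p (k + 1 + c))
          = wE (p k) (p (k + 1))
      rw [if_pos hk, hagree (k + 1) (by omega)]
    · refine Finset.sum_congr rfl fun k hk => ?_
      simp only [Finset.mem_range] at hk
      show wE (if x + k < x then p (x + k) else p (x + k + c))
          (if x + k + 1 < x then p (x + k + 1) else p (x + k + 1 + c))
          = wE (p (x + c + k)) (p (x + c + k + 1))
      rw [if_neg (by omega : ¬ x + k < x), if_neg (by omega : ¬ x + k + 1 < x),
        show x + k + c = x + c + k by omega, show x + k + 1 + c = x + c + k + 1 by omega]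
  have eC : (∑ k ∈ Finset.range c, wE ((fun z => p (x + z)) k) ((fun z => p (x + z)) (k + 1)))
      = ∑ k ∈ Finset.range c, wE (p (x + k)) (p (x + k + 1)) := by
    refine Finset.sum_congr rfl fun k _ => ?_
    show wE (p (x + k)) (p (x + (k + 1))) = wE (p (x + k)) (p (x + k + 1))
    rw [show x + (k + 1) = x + k + 1 by omega]
  have eR : (∑ k ∈ Finset.range (x + c + u), wE (p k) (p (k + 1)))
      = ((∑ k ∈ Finset.range x, wE (p k) (p (k + 1)))
          + ∑ k ∈ Finset.range c, wE (p (x + k)) (p (x + k + 1)))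
        + ∑ k ∈ Finset.range u, wE (p (x + c + k)) (p (x + c + k + 1)) := by
    rw [sum_range_add' (fun k => wE (p k) (p (k + 1))) (x + c) u,
      sum_range_add' (fun k => wE (p k) (p (k + 1))) x c]
  rw [eL, eC, eR]
  ring

lemma multi_remove (E : V → V → Prop) (wE : V → V → ℝ) :
    ∀ (r n t : ℕ) (p : ℕ → V) (X C : ℕ → ℕ),
      IsWalk E n p → t ≤ n →
      (∀ i, i < r → 0 < C i ∧ p (X i) = p (X i + C i) ∧ (X i + C i ≤ t ∨ t ≤ X i)
        ∧ X i + C i ≤ n) →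
      (∀ i, i + 1 < r → X i + C i ≤ X (i + 1)) →
      ∃ n' t' p', IsWalk E n' p' ∧ n' + (∑ i ∈ Finset.range r, C i) = n ∧
        p' 0 = p 0 ∧ p' n' = p n ∧ t' ≤ n' ∧ p' t' = p t ∧
        ((∀ nn pp, 0 < nn → IsClosedWalk E nn pp → walkWeight wE nn pp ≤ 0) →
          walkWeight wE n p ≤ walkWeight wE n' p') := by
  intro r
  induction r with
  | zero =>
      intro n t p X C hp ht _ _
      exact ⟨n, t, p, hp, by simp, rfl, rfl, ht, rfl, fun _ => le_refl _⟩
  | succ r ih =>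
      intro n t p X C hp ht hch hord
      obtain ⟨hCr, hclr, hhalfr, hYn⟩ := hch r (by omega)
      obtain ⟨u, hu⟩ : ∃ u, n = X r + C r + u := ⟨n - (X r + C r), by omega⟩
      subst hu
      obtain ⟨hw1, hagree, hwt⟩ := remove_single E wE (X r) (C r) u p hp hclr
      have hmono : ∀ i, i < r → X i + C i ≤ X r := by
        have haux : ∀ j, j ≤ r → ∀ i, i < j → X i + C i ≤ X j := by
          intro j
          induction j with
          | zero => omega
          | succ j ihj =>
              intro hj i hi
              rcases Nat.lt_or_ge i j with h | h
              · have h1 := ihj (by omega) i h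
                have h2 := hord j (by omega)
                have h3 := (hch j (by omega)).1
                omega
              · have hij : i = j := by omega
                subst hij
                exact hord i (by omega)
        exact haux r le_rfl
      set t1 := if X r + C r ≤ t then t - C r else t with ht1def
      have ht1 : t1 ≤ X r + u := by
        rw [ht1def]
        split_ifs with h
        · omega
        · rcases hhalfr with h' | h' <;> omega
      have hpt1 : (if t1 < X r then p t1 else p (t1 + C r)) = p t := by
        by_cases h : X r + C r ≤ t
        · have he : t1 = t - C r := by rw [ht1def, if_pos h]
          rw [he, if_neg (by omega : ¬ t - C r < X r), show t - C r + C r = t by omega]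
        · have he : t1 = t := by rw [ht1def, if_neg h]
          have htx : t ≤ X r := by rcases hhalfr with h' | h' <;> omega
          rw [he]
          exact hagree t htx
      have hch1 : ∀ i, i < r → 0 < C i
          ∧ (fun z => if z < X r then p z else p (z + C r)) (X i)
            = (fun z => if z < X r then p z else p (z + C r)) (X i + C i)
          ∧ (X i + C i ≤ t1 ∨ t1 ≤ X i) ∧ X i + C i ≤ X r + u := by
        intro i hi
        obtain ⟨h1, h2, h3, h4⟩ := hch i (by omega)
        have hXi := hmono i hi
        refine ⟨h1, ?_, ?_, by omega⟩
        · show (if X i < X r then p (X i) else p (X i + C r))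
            = (if X i + C i < X r then p (X i + C i) else p (X i + C i + C r))
          rw [hagree (X i) (by omega), hagree (X i + C i) hXi]
          exact h2
        · by_cases h : X r + C r ≤ t
          · left; rw [ht1def, if_pos h]; omega
          · have ht' : t ≤ X r := by rcases hhalfr with h' | h' <;> omega
            rw [ht1def, if_neg h]
            exact h3
      obtain ⟨n', t', p', hw', hlen, h0, hend, ht'', hpt', hwt'⟩ :=
        ih (X r + u) t1 (fun z => if z < X r then p z else p (z + C r)) X C hw1 ht1 hch1
          (fun i hi => hord i (by omega))
      refine ⟨n', t', p', hw', ?_, ?_, ?_, ht'', by rw [hpt']; exact hpt1, ?_⟩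
      · rw [Finset.sum_range_succ]; omega
      · rw [h0]; exact hagree 0 (by omega)
      · rw [hend]
        show (if X r + u < X r then p (X r + u) else p (X r + u + C r)) = p (X r + C r + u)
        rw [if_neg (by omega), show X r + u + C r = X r + C r + u by omega]
      · intro hw
        have hchunk : walkWeight wE (C r) (fun z => p (X r + z)) ≤ 0 := by
          refine hw _ _ hCr ⟨fun k hk => hp (X r + k) (by omega), ?_⟩
          show p (X r + 0) = p (X r + C r)
          rw [show X r + 0 = X r by omega]
          exact hclr
        have h1 := hwt' hw
        linarith [hwt]

lemma reduce [Fintype V] (E : V → V → Prop) (wE : V → V → ℝ) (d : ℕ) (hd : 0 < d) :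
    ∀ n : ℕ, ∀ p : ℕ → V, ∀ t : ℕ, IsWalk E n p → t ≤ n →
      ∃ m q s, IsWalk E m q ∧ q 0 = p 0 ∧ q m = p n ∧ s ≤ m ∧ q s = p t ∧
        m ≡ n [MOD d] ∧ m ≤ (d - 1) * circumference E + (d + 1) * cabDiameter E ∧
        ((∀ nn pp, 0 < nn → IsClosedWalk E nn pp → walkWeight wE nn pp ≤ 0) →
          walkWeight wE n p ≤ walkWeight wE m q) := by
  classical
  intro n
  induction n using Nat.strong_induction_on with
  | _ n IH =>
    intro p t hp ht
    by_cases hn : n ≤ (d - 1) * circumference E + (d + 1) * cabDiameter E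
    · exact ⟨n, p, t, hp, rfl, rfl, ht, rfl, Nat.ModEq.refl n, hn, fun _ => le_refl _⟩
    · push_neg at hn
      have h2cd : 2 * cabDiameter E < n := by
        have h1 : 2 * cabDiameter E ≤ (d + 1) * cabDiameter E :=
          Nat.mul_le_mul (by omega) le_rfl
        omega
      have hhalf : cabDiameter E + 1 ≤ t ∨ cabDiameter E + 1 ≤ n - t := by omega
      have hcr1 : 1 ≤ circumference E := by
        rcases hhalf with h | h
        · obtain ⟨x, y, _, hxy, hyt, hcl⟩ := window_repeat hp (e := 0) (by omega)
          exact one_le_cr hp hxy (by omega) hcl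
        · obtain ⟨x, y, _, hxy, hyn, hcl⟩ := window_repeat hp (e := t) (by omega)
          exact one_le_cr hp hxy (by omega) hcl
      set W := cabDiameter E + 1 with hW
      obtain ⟨a, ra, hta, hraW⟩ : ∃ a ra, t = W * a + ra ∧ ra < W :=
        ⟨t / W, t % W, (Nat.div_add_mod t W).symm, Nat.mod_lt _ (by omega)⟩
      obtain ⟨b, rb, htb, hrbW⟩ : ∃ b rb, n - t = W * b + rb ∧ rb < W :=
        ⟨(n - t) / W, (n - t) % W, (Nat.div_add_mod (n - t) W).symm, Nat.mod_lt _ (by omega)⟩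
      have hab : d ≤ a + b := by
        by_contra hcon
        push_neg at hcon
        have h3 : W * a + W * b ≤ W * (d - 1) := by
          have h := Nat.mul_le_mul (le_refl W) (show a + b ≤ d - 1 by omega)
          rwa [Nat.mul_add] at h
        have h4 : d - 1 ≤ (d - 1) * circumference E := by
          have := Nat.mul_le_mul (le_refl (d - 1)) hcr1
          simpa using this
        have h5 : W * (d - 1) = (d - 1) * cabDiameter E + (d - 1) := by
          rw [hW]; ring
        have h6 : (d + 1) * cabDiameter E
            = (d - 1) * cabDiameter E + 2 * cabDiameter E := by
          rw [show d + 1 = d - 1 + 2 by omega]; ring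
        omega
      set lo : ℕ → ℕ := fun i => if i < a then W * i else t + W * (i - a) with hlo
      have hloeq1 : ∀ i, i < a → lo i = W * i := by
        intro i hi; rw [hlo]; simp only [if_pos hi]
      have hloeq2 : ∀ i, a ≤ i → lo i = t + W * (i - a) := by
        intro i hi; rw [hlo]; simp only [if_neg (by omega : ¬ i < a)]
      have hWa : W * a ≤ t := by omega
      have hWb : W * b ≤ n - t := by omega
      have hlo_win : ∀ i, i < d → lo i + W ≤ n ∧ (lo i + W ≤ t ∨ t ≤ lo i) := by
        intro i hi
        by_cases h : i < a
        · have h1 : W * (i + 1) ≤ W * a := Nat.mul_le_mul le_rfl (by omega)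
          have h2 : lo i + W = W * (i + 1) := by rw [hloeq1 i h]; ring
          exact ⟨by omega, Or.inl (by omega)⟩
        · have hai : a ≤ i := by omega
          have h1 : W * (i - a + 1) ≤ W * b := Nat.mul_le_mul le_rfl (by omega)
          have h2 : lo i + W = t + W * (i - a + 1) := by
            rw [hloeq2 i hai, show W * (i - a + 1) = W * (i - a) + W by ring]; omega
          refine ⟨by omega, Or.inr ?_⟩
          rw [hloeq2 i hai]; omega
      have hlo_adj : ∀ i, i + 1 < d → lo i + W ≤ lo (i + 1) := by
        intro i hi
        by_cases h : i < a
        · have h2 : lo i + W = W * (i + 1) := by rw [hloeq1 i h]; ring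
          by_cases h' : i + 1 < a
          · rw [hloeq1 (i + 1) h']
            omega
          · have h3 : W * (i + 1) ≤ W * a := Nat.mul_le_mul le_rfl (by omega)
            rw [hloeq2 (i + 1) (by omega), show i + 1 - a = 0 by omega, Nat.mul_zero]
            omega
        · have hai : a ≤ i := by omega
          have h4 : W * (i + 1 - a) = W * (i - a) + W := by
            rw [show i + 1 - a = i - a + 1 by omega]; ring
          rw [hloeq2 i hai, hloeq2 (i + 1) (by omega)]
          omega
      have hchoice : ∀ i : ℕ, ∃ x y : ℕ, i < d →
          lo i ≤ x ∧ x < y ∧ y ≤ lo i + W ∧ p x = p y := by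
        intro i
        by_cases hi : i < d
        · obtain ⟨x, y, h1, h2, h3, h4⟩ := window_repeat hp (e := lo i) ((hlo_win i hi).1)
          exact ⟨x, y, fun _ => ⟨h1, h2, h3, h4⟩⟩
        · exact ⟨0, 0, fun h => absurd h hi⟩
      choose Xf Yf hXY using hchoice
      set Cf : ℕ → ℕ := fun i => Yf i - Xf i with hCf
      have hCfe : ∀ i, i < d → Xf i + Cf i = Yf i ∧ 0 < Cf i := by
        intro i hi
        obtain ⟨h1, h2, h3, h4⟩ := hXY i hi
        constructor
        · show Xf i + (Yf i - Xf i) = Yf i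
          omega
        · show 0 < Yf i - Xf i
          omega
      have hpig : ∃ a' b', a' < b' ∧ b' ≤ d ∧
          (∑ j ∈ Finset.range a', Cf j) % d = (∑ j ∈ Finset.range b', Cf j) % d := by
        have hmaps : ∀ i ∈ Finset.range (d + 1),
            (∑ j ∈ Finset.range i, Cf j) % d ∈ Finset.range d := by
          intro i _
          exact Finset.mem_range.mpr (Nat.mod_lt _ hd)
        have hcard : (Finset.range d).card < (Finset.range (d + 1)).card := by simp
        obtain ⟨i, hi, j, hj, hne, heq⟩ :=
          Finset.exists_ne_map_eq_of_card_lt_of_maps_to hcard hmaps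
        simp only [Finset.mem_range] at hi hj
        rcases Nat.lt_or_ge i j with h | h
        · exact ⟨i, j, h, by omega, heq⟩
        · exact ⟨j, i, by omega, by omega, heq.symm⟩
      obtain ⟨a', b', hab', hb'd, hSeq⟩ := hpig
      obtain ⟨r, hr⟩ : ∃ r, a' + r = b' := ⟨b' - a', by omega⟩
      have hch : ∀ i, i < r → 0 < Cf (a' + i)
          ∧ p (Xf (a' + i)) = p (Xf (a' + i) + Cf (a' + i))
          ∧ (Xf (a' + i) + Cf (a' + i) ≤ t ∨ t ≤ Xf (a' + i))
          ∧ Xf (a' + i) + Cf (a' + i) ≤ n := by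
        intro i hi
        have hid : a' + i < d := by omega
        obtain ⟨h1, h2, h3, h4⟩ := hXY (a' + i) hid
        obtain ⟨he1, he2⟩ := hCfe (a' + i) hid
        obtain ⟨hwn, hhal⟩ := hlo_win (a' + i) hid
        refine ⟨he2, by rw [he1]; exact h4, ?_, by omega⟩
        rcases hhal with h | h
        · left; omega
        · right; omega
      have hord : ∀ i, i + 1 < r →
          Xf (a' + i) + Cf (a' + i) ≤ Xf (a' + (i + 1)) := by
        intro i hi
        have h1 := hXY (a' + i) (by omega)
        have h2 := hXY (a' + i + 1) (by omega)
        have h3 := hlo_adj (a' + i) (by omega)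
        obtain ⟨he1, he2⟩ := hCfe (a' + i) (by omega)
        rw [show a' + (i + 1) = a' + i + 1 by omega]
        omega
      obtain ⟨n', t', p', hw', hlen, h0, hend, ht', hpt', hwt'⟩ :=
        multi_remove E wE r n t p (fun i => Xf (a' + i)) (fun i => Cf (a' + i)) hp ht hch hord
      have hlen' : n' + (∑ i ∈ Finset.range r, Cf (a' + i)) = n := hlen
      have hsum : (∑ j ∈ Finset.range a', Cf j) + (∑ i ∈ Finset.range r, Cf (a' + i))
          = ∑ j ∈ Finset.range b', Cf j := by
        rw [← hr, sum_range_add']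
      have hRpos : 0 < ∑ i ∈ Finset.range r, Cf (a' + i) := by
        have hmem : (0 : ℕ) ∈ Finset.range r := Finset.mem_range.mpr (by omega)
        have h1 : Cf (a' + 0) ≤ ∑ i ∈ Finset.range r, Cf (a' + i) :=
          Finset.single_le_sum (f := fun i => Cf (a' + i)) (fun i _ => Nat.zero_le _) hmem
        have hpos := (hCfe (a' + 0) (by omega)).2
        omega
      have hdvd : d ∣ ∑ i ∈ Finset.range r, Cf (a' + i) := by
        have hSle : (∑ j ∈ Finset.range a', Cf j) ≤ ∑ j ∈ Finset.range b', Cf j := by omega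
        have hmod : (∑ j ∈ Finset.range a', Cf j) ≡ (∑ j ∈ Finset.range b', Cf j) [MOD d] := hSeq
        have h1 := (Nat.modEq_iff_dvd' hSle).mp hmod
        have heq : (∑ j ∈ Finset.range b', Cf j) - (∑ j ∈ Finset.range a', Cf j)
            = ∑ i ∈ Finset.range r, Cf (a' + i) := by omega
        rwa [heq] at h1
      have hn'lt : n' < n := by omega
      obtain ⟨m, q, s, hq1, hq2, hq3, hq4, hq5, hq6, hq7, hq8⟩ := IH n' hn'lt p' t' hw' ht'
      have hn'n : n' ≡ n [MOD d] := by
        have heq : n - n' = ∑ i ∈ Finset.range r, Cf (a' + i) := by omega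
        exact (Nat.modEq_iff_dvd' (by omega)).mpr (by rw [heq]; exact hdvd)
      exact ⟨m, q, s, hq1, by rw [hq2, h0], by rw [hq3, hend], hq4, by rw [hq5, hpt'],
        hq6.trans hn'n, hq7, fun hw => le_trans (hwt' hw) (hq8 hw)⟩

/-- (Path reduction.) Given a path `p` of length `n` through a node
`k` and a positive modulus `d`, there is a path `q` with the same endpoints, through
`k`, with length congruent to `n` mod `d` and at most `(d−1)·cr(G) + (d+1)·cd(G)`;
if moreover every nonempty closed path has nonpositive weight, `q` can additionally
be chosen with weight at least that of `p`. -/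
theorem stmt_10 {V : Type*} [Fintype V] (E : V → V → Prop) (wE : V → V → ℝ)
    (d : ℕ) (hd : 0 < d)
    (n : ℕ) (p : ℕ → V) (hp : IsWalk E n p) (k : V) (t : ℕ) (ht : t ≤ n) (hk : p t = k) :
    (∃ m q, IsWalk E m q ∧ q 0 = p 0 ∧ q m = p n ∧ (∃ s, s ≤ m ∧ q s = k) ∧
      m ≡ n [MOD d] ∧ m ≤ (d - 1) * circumference E + (d + 1) * cabDiameter E) ∧
    ((∀ nn pp, 0 < nn → IsClosedWalk E nn pp → walkWeight wE nn pp ≤ 0) →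
      ∃ m q, IsWalk E m q ∧ q 0 = p 0 ∧ q m = p n ∧ (∃ s, s ≤ m ∧ q s = k) ∧
        m ≡ n [MOD d] ∧ m ≤ (d - 1) * circumference E + (d + 1) * cabDiameter E ∧
        walkWeight wE n p ≤ walkWeight wE m q) := by
  obtain ⟨m, q, s, h1, h2, h3, h4, h5, h6, h7, h8⟩ := reduce E wE d hd n p t hp ht
  exact ⟨⟨m, q, h1, h2, h3, ⟨s, h4, by rw [h5, hk]⟩, h6, h7⟩,
    fun hw => ⟨m, q, h1, h2, h3, ⟨s, h4, by rw [h5, hk]⟩, h6, h7, h8 hw⟩⟩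

end Transients
end

section
/- Let G be a nontrivial strongly connected directed graph and let i, j be nodes of G. For every integer n ≥ ep(G) + c(G) + cd(G) − 1, there exists a path of length n + c(G) from i to j if and only if there exists a path of length n from i to j. Equivalently, for an irreducible max-plus matrix A with G = G(A): A^{⊗(n+c(G))}_{i,j} = −∞ if and only if A^{⊗n}_{i,j} = −∞. -/
namespace Transients

variable {V : Type*}

section Aux

variable {E : V → V → Prop}

lemma walk_append {m s : ℕ} {p q : ℕ → V} (hp : IsWalk E m p) (hq : IsWalk E s q)
    (h : p m = q 0) : ∃ r, IsWalk E (m + s) r ∧ r 0 = p 0 ∧ r (m + s) = q s := by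
  refine ⟨fun t => if t < m then p t else q (t - m), ?_, ?_, ?_⟩
  · intro k hk
    by_cases hkm : k + 1 < m
    · simp only [show k < m by omega, hkm, if_true]
      exact hp k (by omega)
    · by_cases hk' : k < m
      · have hkm1 : k + 1 = m := by omega
        simp only [hk', hkm, if_true, if_false]
        have : q (k + 1 - m) = p m := by rw [hkm1]; simp [h]
        rw [this, ← hkm1]
        exact hp k (by omega)
      · simp only [hk', hkm, if_false]
        have : k + 1 - m = (k - m) + 1 := by omega
        rw [this]
        exact hq (k - m) (by omega)
  · by_cases hm : 0 < m
    · simp [hm]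
    · have hm0 : m = 0 := by omega
      subst hm0
      simpa using h.symm
  · simp only [show ¬ (m + s < m) by omega, if_false]
    congr 1
    omega

lemma walk_append' {m s : ℕ} {p q : ℕ → V} (hp : IsWalk E m p) (hq : IsWalk E s q)
    (h : p m = q 0) : ∃ r, IsWalk E (m + s) r ∧ r 0 = p 0 ∧ r (m + s) = q s :=
  walk_append hp hq h

/-- Cycle-removal: every walk can be reduced to a simple walk with the same endpoints,
removing lengths divisible by `c`. -/
lemma walk_reduce {c : ℕ} (hc : IsGcdOf c (ClosedLengths E)) :
    ∀ n (p : ℕ → V), IsWalk E n p →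
      ∃ s q, IsSimpleWalk E s q ∧ q 0 = p 0 ∧ q s = p n ∧ s ≤ n ∧ c ∣ (n - s) := by
  intro n
  induction n using Nat.strong_induction_on with
  | _ n IH =>
    intro p hp
    by_cases hsimp : ∀ k l, k ≤ n → l ≤ n → p k = p l → k = l
    · exact ⟨n, p, ⟨hp, hsimp⟩, rfl, rfl, le_refl n, by simp⟩
    · push_neg at hsimp
      obtain ⟨k, l, hk, hl, hkl, hlt⟩ :
          ∃ k l, k ≤ n ∧ l ≤ n ∧ p k = p l ∧ k < l := by
        obtain ⟨k, l, hk, hl, hkl, hne⟩ := hsimp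
        rcases hne.lt_or_gt with h | h
        · exact ⟨k, l, hk, hl, hkl, h⟩
        · exact ⟨l, k, hl, hk, hkl.symm, h⟩
      · -- removed closed walk of length l - k
        have hcyc : (l - k) ∈ ClosedLengths E := by
          refine ⟨by omega, fun t => p (k + t), ?_, ?_⟩
          · intro t ht
            have : k + t < n := by omega
            have := hp (k + t) this
            simpa [Nat.add_assoc] using this
          · simp only
            rw [show k + (l - k) = l by omega]
            exact hkl
        have hdvd : c ∣ (l - k) := hc.1 _ hcyc
        -- shortened walk
        set d := l - k with hd
        have hdpos : 0 < d := by omega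
        set q : ℕ → V := fun t => if t ≤ k then p t else p (t + d) with hq
        have hqwalk : IsWalk E (n - d) q := by
          intro t ht
          by_cases htk : t + 1 ≤ k
          · simp only [hq, show t ≤ k by omega, htk, if_true]
            exact hp t (by omega)
          · by_cases htk' : t ≤ k
            · have htk1 : t = k := by omega
              simp only [hq, htk', htk, if_true, if_false]
              subst htk1
              rw [hkl, show t + 1 + d = l + 1 by omega, show p l = p (l) from rfl]
              have := hp l (by omega)
              convert this using 2
            · simp only [hq, htk', htk, if_false]
              rw [show t + 1 + d = (t + d) + 1 by omega]
              exact hp (t + d) (by omega)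
        obtain ⟨s, q', hq', h0, hend, hsle, hsdvd⟩ := IH (n - d) (by omega) q hqwalk
        refine ⟨s, q', hq', ?_, ?_, by omega, ?_⟩
        · rw [h0]; simp [hq]
        · rw [hend]
          simp only [hq]
          by_cases hnd : n - d ≤ k
          · have h1 : l = n := by omega
            have h2 : n - d = k := by omega
            simp only [h2, le_refl, if_true]
            rw [hkl, h1]
          · simp only [hnd, if_false]
            congr 1
            omega
        · have h1 : n - s = (n - d - s) + d := by omega
          rw [h1]
          exact Nat.dvd_add hsdvd hdvd

end Aux

section AuxFin

variable {N : ℕ} {E : Fin N → Fin N → Prop}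

lemma simple_le_cabDiameter {s : ℕ} {q : ℕ → Fin N} (h : IsSimpleWalk E s q) :
    s ≤ cabDiameter E := by
  have hbdd : BddAbove {n | ∃ p, IsSimpleWalk E n p} := by
    refine ⟨N, fun x hx => ?_⟩
    obtain ⟨p, hpw, hpinj⟩ := hx
    have hinj : Function.Injective (fun t : Fin (x + 1) => p t) := by
      intro a b hab
      have := hpinj a b (by omega) (by omega) hab
      exact Fin.ext this
    have hcard := Fintype.card_le_of_injective _ hinj
    simp only [Fintype.card_fin] at hcard
    omega
  exact le_csSup hbdd ⟨q, h⟩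

lemma exists_walk_succ (E : Fin N → Fin N → Prop) (n : ℕ) (i j : Fin N) :
    (∃ p, IsWalk E (n + 1) p ∧ p 0 = i ∧ p (n + 1) = j) ↔
      ∃ k, E i k ∧ ∃ p, IsWalk E n p ∧ p 0 = k ∧ p n = j := by
  constructor
  · rintro ⟨p, hp, h0, hend⟩
    refine ⟨p 1, by rw [← h0]; exact hp 0 (by omega), fun t => p (t + 1), ?_, rfl, hend⟩
    intro t ht
    exact hp (t + 1) (by omega)
  · rintro ⟨k, hik, p, hp, h0, hend⟩
    refine ⟨fun t => if t = 0 then i else p (t - 1), ?_, by simp, ?_⟩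
    · intro t ht
      by_cases ht0 : t = 0
      · subst ht0
        simpa [h0] using hik
      · simp only [ht0, if_false, show t + 1 ≠ 0 by omega]
        rw [show t + 1 - 1 = (t - 1) + 1 by omega]
        exact hp (t - 1) (by omega)
    · simp only [show n + 1 ≠ 0 by omega, if_false]
      simpa using hend

lemma mpPow_ne_bot_iff (A : Matrix (Fin N) (Fin N) (WithBot ℝ)) :
    ∀ (n : ℕ) (i j : Fin N), mpPow A n i j ≠ ⊥ ↔
      ∃ p, IsWalk (mEdge A) n p ∧ p 0 = i ∧ p n = j := by
  intro n
  induction n with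
  | zero =>
    intro i j
    simp only [mpPow]
    constructor
    · intro h
      by_cases hij : i = j
      · exact ⟨fun _ => i, fun k hk => absurd hk (by omega), rfl, hij⟩
      · simp [hij] at h
    · rintro ⟨p, _, h0, hend⟩
      have : i = j := by rw [← h0, hend]
      simp [this]
  | succ n IH =>
    intro i j
    simp only [mpPow, mpMul]
    rw [Ne, Finset.sup_eq_bot_iff]
    push_neg
    constructor
    · rintro ⟨k, -, hk⟩
      rw [Ne, WithBot.add_eq_bot] at hk
      push_neg at hk
      rw [exists_walk_succ]
      exact ⟨k, hk.1, (IH k j).mp hk.2⟩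
    · intro h
      rw [exists_walk_succ] at h
      obtain ⟨k, hik, hw⟩ := h
      refine ⟨k, Finset.mem_univ k, ?_⟩
      rw [Ne, WithBot.add_eq_bot]
      push_neg
      exact ⟨hik, (IH k j).mpr hw⟩

end AuxFin

/-- For an irreducible max-plus matrix `A` with `G = G(A)` and every
`n ≥ ep(G) + c(G) + cd(G) − 1`: there is a path of length `n + c(G)` from `i` to `j`
iff there is one of length `n`; equivalently `A^{⊗(n+c)}_{i,j} = −∞ ↔ A^{⊗n}_{i,j} = −∞`. -/
theorem stmt_16 {N : ℕ} (A : Matrix (Fin N) (Fin N) (WithBot ℝ)) (hA : MPIrreducible A)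
    (c ep : ℕ) (hc : IsGcdOf c (ClosedLengths (mEdge A))) (hep : IsEp (mEdge A) c ep)
    (i j : Fin N) (n : ℕ) (hn : ep + c + cabDiameter (mEdge A) ≤ n + 1) :
    ((∃ p, IsWalk (mEdge A) (n + c) p ∧ p 0 = i ∧ p (n + c) = j) ↔
      (∃ p, IsWalk (mEdge A) n p ∧ p 0 = i ∧ p n = j)) ∧
    (mpPow A (n + c) i j = ⊥ ↔ mpPow A n i j = ⊥) := by
  set E := mEdge A with hE
  -- c is positive
  have hcpos : 0 < c := by
    obtain ⟨a, b, hab⟩ := hA.2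
    obtain ⟨m, q, hq, hq0, hqm⟩ := hA.1 b a
    have hone : IsWalk E 1 (fun t => if t = 0 then a else b) := by
      intro k hk
      have : k = 0 := by omega
      subst this
      simpa using hab
    obtain ⟨r, hr, hr0, hrend⟩ := walk_append hone hq (by simpa using hq0.symm)
    have hmem : (1 + m) ∈ ClosedLengths E := by
      refine ⟨by omega, r, hr, ?_⟩
      rw [hr0, hrend, hqm]
      simp
    have := hc.1 _ hmem
    rcases Nat.eq_zero_or_pos c with h0 | h
    · rw [h0, Nat.zero_dvd] at this
      omega
    · exact h
  have hcd : cabDiameter E = cabDiameter E := rfl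
  -- key transfer lemma
  have key : ∀ m m' : ℕ,
      (∀ s, s ≤ cabDiameter E → s ≤ m → c ∣ m - s → (c ∣ m' - s ∧ s ≤ m' ∧ ep ≤ m' - s)) →
      (∃ p, IsWalk E m p ∧ p 0 = i ∧ p m = j) →
      ∃ p, IsWalk E m' p ∧ p 0 = i ∧ p m' = j := by
    rintro m m' H ⟨p, hp, h0, hend⟩
    obtain ⟨s, q, hq, hq0, hqend, hsle, hdvd⟩ := walk_reduce hc m p hp
    obtain ⟨hd', hsle', hep'⟩ := H s (simple_le_cabDiameter hq) hsle hdvd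
    obtain ⟨r, hr, hr0, hrend⟩ := hep.1 i (m' - s) hd' hep'
    obtain ⟨w, hw, hw0, hwend⟩ := walk_append hr hq.1 (by rw [hrend, hq0, h0])
    rw [Nat.sub_add_cancel hsle'] at hw hwend
    exact ⟨w, hw, by rw [hw0, hr0], by rw [hwend, hqend, hend]⟩
  have hfirst : (∃ p, IsWalk E (n + c) p ∧ p 0 = i ∧ p (n + c) = j) ↔
      (∃ p, IsWalk E n p ∧ p 0 = i ∧ p n = j) := by
    constructor
    · refine key (n + c) n ?_
      intro s hscd hsm hdvd
      refine ⟨?_, by omega, by omega⟩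
      have h1 := Nat.dvd_sub hdvd (dvd_refl c)
      simpa [show n + c - s - c = n - s by omega] using h1
    · refine key n (n + c) ?_
      intro s hscd hsm hdvd
      refine ⟨?_, by omega, by omega⟩
      have : n + c - s = (n - s) + c := by omega
      rw [this]
      exact Nat.dvd_add hdvd (dvd_refl c)
  refine ⟨hfirst, ?_⟩
  have h2 := mpPow_ne_bot_iff A (n + c) i j
  have h3 := mpPow_ne_bot_iff A n i j
  exact not_iff_not.mp (h2.trans (hfirst.trans h3.symm))

end Transients
end
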